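/- Let μ be a regular conditional distribution for P given 𝓐 and suppose there is A₀ ∈ 𝓐 with P(A₀) = 1 such that μ(ω) is 0-1 on 𝓐 for all ω ∈ A₀. If Q ≪ P, then any regular conditional distribution ν for Q given 𝓐 satisfies: there exists A' ∈ 𝓐 with Q(A') = 1 and ν(ω) is 0-1 valued on 𝓐 for all ω ∈ A'. -/

import Mathlib

open MeasureTheory MeasurableSpace Set Filter
open scoped ENNReal

/-- A regular conditional distribution for `P` given the sub-σ-field `𝓐`. -/
def IsRCD {Ω : Type*} [m𝓑 : MeasurableSpace Ω] (𝓐 : MeasurableSpace Ω)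
    (P : @Measure Ω m𝓑) (μ : Ω → @Measure Ω m𝓑) : Prop :=
  (∀ ω, IsProbabilityMeasure (μ ω)) ∧
  (∀ B : Set Ω, MeasurableSet[m𝓑] B → Measurable[𝓐] fun ω => μ ω B) ∧
  (∀ B : Set Ω, MeasurableSet[m𝓑] B → ∀ A : Set Ω, MeasurableSet[𝓐] A →
    ∫⁻ ω in A, μ ω B ∂P = P (A ∩ B))

section Aux

variable {Ω : Type*} (𝓐 : MeasurableSpace Ω) [m𝓑 : MeasurableSpace Ω]
  (P : @Measure Ω m𝓑) (μ : Ω → @Measure Ω m𝓑)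

/-- Measurability of `ω ↦ ∫⁻ h dμ ω`. -/
lemma aux_meas (hμm : ∀ B : Set Ω, MeasurableSet[m𝓑] B → Measurable[𝓐] fun ω => μ ω B)
    {h : Ω → ℝ≥0∞} (hh : Measurable[m𝓑] h) :
    Measurable[𝓐] fun ω => ∫⁻ x, h x ∂μ ω := by
  refine @Measurable.ennreal_induction Ω m𝓑
    (fun h => Measurable[𝓐] fun ω => ∫⁻ x, h x ∂μ ω) ?_ ?_ ?_ h hh
  · intro c s hs
    simp_rw [lintegral_indicator_const hs]
    exact (hμm s hs).const_mul c
  · intro f g _ hf hg hPf hPg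
    simp_rw [Pi.add_apply, lintegral_add_left hf]
    exact hPf.add hPg
  · intro f hf hmono hPf
    simp_rw [lintegral_iSup hf hmono]
    exact .iSup hPf

/-- Disintegration identity for lintegrals. -/
lemma aux_disint (h𝓐 : 𝓐 ≤ m𝓑)
    (hμm : ∀ B : Set Ω, MeasurableSet[m𝓑] B → Measurable[𝓐] fun ω => μ ω B)
    (hμi : ∀ B : Set Ω, MeasurableSet[m𝓑] B → ∀ A : Set Ω, MeasurableSet[𝓐] A →
      ∫⁻ ω in A, μ ω B ∂P = P (A ∩ B))
    {h : Ω → ℝ≥0∞} (hh : Measurable[m𝓑] h) {A : Set Ω} (hA : MeasurableSet[𝓐] A) :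
    ∫⁻ ω in A, (∫⁻ x, h x ∂μ ω) ∂P = ∫⁻ x in A, h x ∂P := by
  refine @Measurable.ennreal_induction Ω m𝓑
    (fun h => ∫⁻ ω in A, (∫⁻ x, h x ∂μ ω) ∂P = ∫⁻ x in A, h x ∂P) ?_ ?_ ?_ h hh
  · intro c s hs
    calc ∫⁻ ω in A, (∫⁻ x, s.indicator (fun _ => c) x ∂μ ω) ∂P
        = ∫⁻ ω in A, c * μ ω s ∂P := lintegral_congr fun ω => lintegral_indicator_const hs c
      _ = c * ∫⁻ ω in A, μ ω s ∂P :=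
          lintegral_const_mul c ((hμm s hs).mono h𝓐 le_rfl)
      _ = c * P (A ∩ s) := by rw [hμi s hs A hA]
      _ = ∫⁻ x in A, s.indicator (fun _ => c) x ∂P := by
          rw [lintegral_indicator_const (μ := P.restrict A) hs, Measure.restrict_apply hs,
            inter_comm]
  · intro f g _ hf hg hPf hPg
    calc ∫⁻ ω in A, (∫⁻ x, (f + g) x ∂μ ω) ∂P
        = ∫⁻ ω in A, ((∫⁻ x, f x ∂μ ω) + ∫⁻ x, g x ∂μ ω) ∂P :=
          lintegral_congr fun ω => lintegral_add_left hf g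
      _ = (∫⁻ ω in A, (∫⁻ x, f x ∂μ ω) ∂P) + ∫⁻ ω in A, (∫⁻ x, g x ∂μ ω) ∂P :=
          lintegral_add_left ((aux_meas 𝓐 μ hμm hf).mono h𝓐 le_rfl) _
      _ = (∫⁻ x in A, f x ∂P) + ∫⁻ x in A, g x ∂P := by rw [hPf, hPg]
      _ = ∫⁻ x in A, (f + g) x ∂P := (lintegral_add_left hf g).symm
  · intro f hf hmono hPf
    calc ∫⁻ ω in A, (∫⁻ x, ⨆ n, f n x ∂μ ω) ∂P
        = ∫⁻ ω in A, (⨆ n, ∫⁻ x, f n x ∂μ ω) ∂P :=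
          lintegral_congr fun ω => lintegral_iSup hf hmono
      _ = ⨆ n, ∫⁻ ω in A, (∫⁻ x, f n x ∂μ ω) ∂P :=
          lintegral_iSup (fun n => (aux_meas 𝓐 μ hμm (hf n)).mono h𝓐 le_rfl)
            (fun n m hnm ω => lintegral_mono fun x => hmono hnm x)
      _ = ⨆ n, ∫⁻ x in A, f n x ∂P := iSup_congr hPf
      _ = ∫⁻ x in A, ⨆ n, f n x ∂P := (lintegral_iSup hf hmono).symm

/-- Pull-out property: `ω ↦ ∫⁻ f dμ ω` behaves as a conditional expectation of `f`. -/
lemma aux_pullout (h𝓐 : 𝓐 ≤ m𝓑)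
    (hμm : ∀ B : Set Ω, MeasurableSet[m𝓑] B → Measurable[𝓐] fun ω => μ ω B)
    (hμi : ∀ B : Set Ω, MeasurableSet[m𝓑] B → ∀ A : Set Ω, MeasurableSet[𝓐] A →
      ∫⁻ ω in A, μ ω B ∂P = P (A ∩ B))
    {f : Ω → ℝ≥0∞} (hf : Measurable[m𝓑] f)
    {ψ : Ω → ℝ≥0∞} (hψ : Measurable[𝓐] ψ) :
    ∫⁻ x, ψ x * f x ∂P = ∫⁻ x, ψ x * (∫⁻ y, f y ∂μ x) ∂P := by
  have hg : Measurable[m𝓑] fun ω => ∫⁻ y, f y ∂μ ω :=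
    (aux_meas 𝓐 μ hμm hf).mono h𝓐 le_rfl
  refine @Measurable.ennreal_induction Ω 𝓐
    (fun ψ => ∫⁻ x, ψ x * f x ∂P = ∫⁻ x, ψ x * (∫⁻ y, f y ∂μ x) ∂P) ?_ ?_ ?_ ψ hψ
  · intro c s hs
    have hs' : MeasurableSet[m𝓑] s := h𝓐 s hs
    have h1 : ∀ u : Ω → ℝ≥0∞, Measurable[m𝓑] u → ∫⁻ x, s.indicator (fun _ => c) x * u x ∂P
        = c * ∫⁻ x in s, u x ∂P := by
      intro u hu
      calc ∫⁻ x, s.indicator (fun _ => c) x * u x ∂P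
          = ∫⁻ x, s.indicator (fun y => c * u y) x ∂P :=
            lintegral_congr fun x => by by_cases hx : x ∈ s <;> simp [hx]
        _ = ∫⁻ x in s, c * u x ∂P := lintegral_indicator hs' _
        _ = c * ∫⁻ x in s, u x ∂P := lintegral_const_mul c hu
    rw [h1 f hf, h1 _ hg, aux_disint 𝓐 P μ h𝓐 hμm hμi hf hs]
  · intro ψ₁ ψ₂ _ hψ₁ hψ₂ h1 h2
    calc ∫⁻ x, (ψ₁ + ψ₂) x * f x ∂P
        = (∫⁻ x, ψ₁ x * f x ∂P) + ∫⁻ x, ψ₂ x * f x ∂P := by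
          simp_rw [Pi.add_apply, add_mul]
          exact lintegral_add_left ((hψ₁.mono h𝓐 le_rfl).mul hf) _
      _ = (∫⁻ x, ψ₁ x * (∫⁻ y, f y ∂μ x) ∂P) + ∫⁻ x, ψ₂ x * (∫⁻ y, f y ∂μ x) ∂P := by
          rw [h1, h2]
      _ = ∫⁻ x, (ψ₁ + ψ₂) x * (∫⁻ y, f y ∂μ x) ∂P := by
          simp_rw [Pi.add_apply, add_mul]
          exact (lintegral_add_left ((hψ₁.mono h𝓐 le_rfl).mul hg) _).symm
  · intro ψn hψn hmono h
    calc ∫⁻ x, (fun x => ⨆ n, ψn n x) x * f x ∂P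
        = ∫⁻ x, ⨆ n, ψn n x * f x ∂P := by
          simp_rw [ENNReal.iSup_mul]
      _ = ⨆ n, ∫⁻ x, ψn n x * f x ∂P :=
          lintegral_iSup (fun n => ((hψn n).mono h𝓐 le_rfl).mul hf)
            (fun n m hnm x => mul_le_mul_left (hmono hnm x) _)
      _ = ⨆ n, ∫⁻ x, ψn n x * (∫⁻ y, f y ∂μ x) ∂P := iSup_congr h
      _ = ∫⁻ x, ⨆ n, ψn n x * (∫⁻ y, f y ∂μ x) ∂P :=
          (lintegral_iSup (fun n => ((hψn n).mono h𝓐 le_rfl).mul hg)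
            (fun n m hnm x => mul_le_mul_left (hmono hnm x) _)).symm
      _ = ∫⁻ x, (fun x => ⨆ n, ψn n x) x * (∫⁻ y, f y ∂μ x) ∂P := by
          simp_rw [ENNReal.iSup_mul]

end Aux

/-- The 0-1 law on 𝓐 is preserved under an absolutely continuous change
of probability measure. -/
theorem stmt_10 {Ω : Type*} [m𝓑 : MeasurableSpace Ω] [CountablyGenerated Ω]
    (P Q : @Measure Ω m𝓑) (hP : IsProbabilityMeasure P) (hQprob : IsProbabilityMeasure Q)
    (𝓐 : MeasurableSpace Ω) (h𝓐 : 𝓐 ≤ m𝓑)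
    (μ : Ω → @Measure Ω m𝓑) (hμ : @IsRCD Ω m𝓑 𝓐 P μ)
    (A₀ : Set Ω) (hA₀ : MeasurableSet[𝓐] A₀) (hA₀1 : P A₀ = 1)
    (h01 : ∀ ω ∈ A₀, ∀ A : Set Ω, MeasurableSet[𝓐] A → μ ω A = 0 ∨ μ ω A = 1)
    (habs : Q ≪ P)
    (ν : Ω → @Measure Ω m𝓑) (hν : @IsRCD Ω m𝓑 𝓐 Q ν) :
    ∃ A' : Set Ω, MeasurableSet[𝓐] A' ∧ Q A' = 1 ∧
      ∀ ω ∈ A', ∀ A : Set Ω, MeasurableSet[𝓐] A → ν ω A = 0 ∨ ν ω A = 1 := by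
  classical
  letI : MeasurableSpace Ω := m𝓑
  haveI := hP; haveI := hQprob
  obtain ⟨hμp, hμm, hμi⟩ := hμ
  obtain ⟨hνp, hνm, hνi⟩ := hν
  set f : Ω → ℝ≥0∞ := Q.rnDeriv P with hfdef
  have hf : Measurable[m𝓑] f := Measure.measurable_rnDeriv Q P
  have hQd : P.withDensity f = Q := Measure.withDensity_rnDeriv_eq Q P habs
  set g : Ω → ℝ≥0∞ := fun ω => ∫⁻ x, f x ∂μ ω with hgdef
  have hg𝓐 : Measurable[𝓐] g := aux_meas 𝓐 μ hμm hf
  have hg : Measurable[m𝓑] g := hg𝓐.mono h𝓐 le_rfl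
  -- the good set where normalization works
  set G : Set Ω := g ⁻¹' (Set.Ioo 0 ⊤) with hGdef
  have hG𝓐 : MeasurableSet[𝓐] G := hg𝓐 measurableSet_Ioo
  have hGmem : ∀ ω, ω ∈ G ↔ 0 < g ω ∧ g ω < ⊤ := fun ω => Iff.rfl
  -- integral of g over A ∈ 𝓐 is Q A
  have hgint : ∀ A : Set Ω, MeasurableSet[𝓐] A → ∫⁻ ω in A, g ω ∂P = Q A := by
    intro A hA
    rw [show (fun ω => g ω) = g from rfl]
    rw [hgdef]
    rw [aux_disint 𝓐 P μ h𝓐 hμm hμi hf hA, ← withDensity_apply f (h𝓐 A hA), hQd]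
  -- Q Gᶜ = 0
  have hQGc : Q Gᶜ = 0 := by
    have h0 : Q (g ⁻¹' {0}) = 0 := by
      have hZ : MeasurableSet[𝓐] (g ⁻¹' {0}) := hg𝓐 (measurableSet_singleton 0)
      rw [← hgint _ hZ,
        setLIntegral_congr_fun (h𝓐 _ hZ) (fun x (hx : g x = 0) => hx)]
      simp
    have htop : Q (g ⁻¹' {⊤}) = 0 := by
      refine habs ?_
      have hlt : ∀ᵐ ω ∂P, g ω < ⊤ := by
        refine ae_lt_top hg ?_
        rw [← setLIntegral_univ, hgint univ MeasurableSet.univ, measure_univ]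
        exact ENNReal.one_ne_top
      refine measure_mono_null ?_ hlt
      intro x hx
      simp only [mem_preimage, mem_singleton_iff] at hx
      simp [hx]
    refine measure_mono_null ?_ (measure_union_null h0 htop)
    intro x hx
    simp only [mem_compl_iff, hGmem, not_and_or, not_lt, le_zero_iff, top_le_iff] at hx
    simpa using hx
  have hsetae : ∀ s t : Set Ω, s \ t ⊆ Gᶜ → t \ s ⊆ Gᶜ → s =ᵐ[Q] t := fun s t h1 h2 =>
    ae_eq_set.2 ⟨measure_mono_null h1 hQGc, measure_mono_null h2 hQGc⟩
  -- candidate RCD built from μ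
  set ν' : Ω → @Measure Ω m𝓑 :=
    fun ω => if ω ∈ G then (g ω)⁻¹ • ((μ ω).withDensity f) else Q with hν'def
  set w : Set Ω → Ω → ℝ≥0∞ := fun B ω => ∫⁻ x, B.indicator f x ∂μ ω with hwdef
  have hw𝓐 : ∀ B : Set Ω, MeasurableSet[m𝓑] B → Measurable[𝓐] (w B) :=
    fun B hB => aux_meas 𝓐 μ hμm (hf.indicator hB)
  have hν'app : ∀ B : Set Ω, MeasurableSet[m𝓑] B → ∀ ω ∈ G,
      ν' ω B = (g ω)⁻¹ * w B ω := by
    intro B hB ω hω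
    simp only [hν'def, if_pos hω, Measure.smul_apply, smul_eq_mul,
      withDensity_apply f hB, hwdef, lintegral_indicator hB]
  have hν'meas : ∀ B : Set Ω, MeasurableSet[m𝓑] B → Measurable[𝓐] fun ω => ν' ω B := by
    intro B hB
    have : (fun ω => ν' ω B)
        = fun ω => if ω ∈ G then (g ω)⁻¹ * w B ω else Q B := by
      ext ω
      by_cases hω : ω ∈ G
      · rw [if_pos hω, hν'app B hB ω hω]
      · simp [hν'def, if_neg hω]
    rw [this]
    exact Measurable.ite hG𝓐 (hg𝓐.inv.mul (hw𝓐 B hB)) measurable_const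
  -- ν' satisfies the RCD integral identity
  have hν'int : ∀ B : Set Ω, MeasurableSet[m𝓑] B → ∀ A : Set Ω, MeasurableSet[𝓐] A →
      ∫⁻ ω in A, ν' ω B ∂Q = Q (A ∩ B) := by
    intro B hB A hA
    have hAG𝓐 : MeasurableSet[𝓐] (A ∩ G) := hA.inter hG𝓐
    have hAG : MeasurableSet[m𝓑] (A ∩ G) := h𝓐 _ hAG𝓐
    have hae : (A ∩ G : Set Ω) =ᵐ[Q] A :=
      hsetae (A ∩ G) A (fun x hx => (hx.2 hx.1.1).elim) (fun x hx hG => hx.2 ⟨hx.1, hG⟩)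
    set ψ : Ω → ℝ≥0∞ := (A ∩ G).indicator (fun ω => (g ω)⁻¹ * w B ω) with hψdef
    have hψ𝓐 : Measurable[𝓐] ψ := (hg𝓐.inv.mul (hw𝓐 B hB)).indicator hAG𝓐
    calc ∫⁻ ω in A, ν' ω B ∂Q
        = ∫⁻ ω in A ∩ G, ν' ω B ∂Q := (setLIntegral_congr hae).symm
      _ = ∫⁻ ω in A ∩ G, (g ω)⁻¹ * w B ω ∂Q :=
          setLIntegral_congr_fun hAG (fun ω hω => hν'app B hB ω hω.2)
      _ = ∫⁻ ω in A ∩ G, (g ω)⁻¹ * w B ω ∂(P.withDensity f) := by rw [hQd]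
      _ = ∫⁻ ω, (f * fun ω => (g ω)⁻¹ * w B ω) ω ∂(P.restrict (A ∩ G)) := by
          rw [restrict_withDensity hAG, lintegral_withDensity_eq_lintegral_mul _ hf
            (show Measurable fun ω => (g ω)⁻¹ * w B ω from hg.inv.mul ((hw𝓐 B hB).mono h𝓐 le_rfl))]
      _ = ∫⁻ ω, ψ ω * f ω ∂P := by
          rw [← lintegral_indicator hAG]
          refine lintegral_congr fun ω => ?_
          by_cases hω : ω ∈ A ∩ G <;> simp [hψdef, hω, mul_comm]
      _ = ∫⁻ ω, ψ ω * g ω ∂P := aux_pullout 𝓐 P μ h𝓐 hμm hμi hf hψ𝓐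
      _ = ∫⁻ ω in A ∩ G, w B ω ∂P := by
          rw [← lintegral_indicator hAG]
          refine lintegral_congr fun ω => ?_
          by_cases hω : ω ∈ A ∩ G
          · have hωG := (hGmem ω).1 hω.2
            simp only [hψdef, indicator_of_mem hω]
            rw [mul_comm ((g ω)⁻¹) (w B ω), mul_assoc,
              ENNReal.inv_mul_cancel hωG.1.ne' hωG.2.ne, mul_one]
          · simp [hψdef, indicator_of_notMem hω]
      _ = ∫⁻ x in A ∩ G, B.indicator f x ∂P := by
          simp only [hwdef]
          exact aux_disint 𝓐 P μ h𝓐 hμm hμi (hf.indicator hB) hAG𝓐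
      _ = ∫⁻ x in B ∩ (A ∩ G), f x ∂P := by
          rw [lintegral_indicator hB, Measure.restrict_restrict hB]
      _ = (P.withDensity f) (B ∩ (A ∩ G)) := (withDensity_apply f (hB.inter hAG)).symm
      _ = Q (B ∩ (A ∩ G)) := by rw [hQd]
      _ = Q (A ∩ B) :=
          measure_congr (hsetae _ _ (fun x hx => (hx.2 ⟨hx.1.2.1, hx.1.1⟩).elim)
            (fun x hx hG => hx.2 ⟨hx.1.2, hx.1.1, hG⟩))
  -- a.e. uniqueness of RCDs on each fixed set
  have key : ∀ B : Set Ω, MeasurableSet[m𝓑] B → ∀ᵐ ω ∂Q, ν ω B = ν' ω B := by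
    intro B hB
    have h1 : Measurable[𝓐] fun ω => ν ω B := hνm B hB
    have h2 := hν'meas B hB
    haveI : IsFiniteMeasure (Q.trim h𝓐) := isFiniteMeasure_trim h𝓐
    have htrim : ∀ F : Ω → ℝ≥0∞, Measurable[𝓐] F → ∀ s : Set Ω, MeasurableSet[𝓐] s →
        ∫⁻ x in s, F x ∂(Q.trim h𝓐) = ∫⁻ x in s, F x ∂Q := by
      intro F hF s hs
      rw [← lintegral_indicator (μ := Q.trim h𝓐) hs, lintegral_trim h𝓐 (hF.indicator hs),
        lintegral_indicator (h𝓐 s hs)]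
    refine ae_eq_of_ae_eq_trim (hm := h𝓐) ?_
    refine ae_eq_of_forall_setLIntegral_eq_of_sigmaFinite h1 h2 ?_
    intro s hs _
    rw [htrim _ h1 s hs, htrim _ h2 s hs, hνi B hB s hs, hν'int B hB s hs]
  -- countable generating π-system
  set u : ℕ → Set Ω := natGeneratingSequence Ω with hu
  set C : Set (Set Ω) := (fun F : Finset ℕ => ⋂ i ∈ F, u i) '' {F | F.Nonempty} with hC
  have hCc : C.Countable := Set.Countable.image (Set.to_countable _) _
  have hCmeas : ∀ s ∈ C, MeasurableSet[m𝓑] s := by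
    rintro s ⟨F, -, rfl⟩
    exact MeasurableSet.biInter F.countable_toSet
      fun i _ => measurableSet_natGeneratingSequence i
  have hCpi : IsPiSystem C := by
    rintro s ⟨F, hF, rfl⟩ t ⟨F', hF', rfl⟩ -
    obtain ⟨i, hi⟩ := hF
    refine ⟨F ∪ F', ⟨i, Finset.mem_union_left _ hi⟩, ?_⟩
    ext x
    simp [Finset.mem_union, or_imp, forall_and]
  have hCgen : m𝓑 = generateFrom C := by
    refine le_antisymm ?_ (generateFrom_le hCmeas)
    refine le_trans (le_of_eq (generateFrom_natGeneratingSequence Ω).symm)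
      (generateFrom_mono ?_)
    rintro s ⟨n, rfl⟩
    exact ⟨{n}, ⟨n, Finset.mem_singleton_self n⟩, by simp [hu]⟩
  -- the full set
  set D : Set (Set Ω) := insert Set.univ C with hD
  have hDc : D.Countable := hCc.insert _
  have hDmeas : ∀ s ∈ D, MeasurableSet[m𝓑] s := by
    intro s hs
    rcases mem_insert_iff.1 hs with rfl | hs
    · exact MeasurableSet.univ
    · exact hCmeas s hs
  set N : Set Ω := ⋂ s ∈ D, {ω | ν ω s = ν' ω s} with hN
  have hN𝓐 : MeasurableSet[𝓐] N := by
    refine MeasurableSet.biInter hDc fun s hs => ?_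
    exact MeasureTheory.StronglyMeasurable.measurableSet_eq_fun ((hνm s (hDmeas s hs)).stronglyMeasurable)
      ((hν'meas s (hDmeas s hs)).stronglyMeasurable)
  have hQN : Q Nᶜ = 0 := by
    rw [hN, compl_iInter₂]
    refine (measure_biUnion_null_iff hDc).2 fun s hs => ?_
    have hk := key s (hDmeas s hs)
    rw [ae_iff] at hk
    simpa [compl_setOf] using hk
  refine ⟨(A₀ ∩ G) ∩ N, (hA₀.inter hG𝓐).inter hN𝓐, ?_, ?_⟩
  · rw [← prob_compl_eq_zero_iff (h𝓐 _ ((hA₀.inter hG𝓐).inter hN𝓐)), compl_inter,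
      compl_inter]
    refine measure_union_null (measure_union_null ?_ hQGc) hQN
    exact habs ((prob_compl_eq_zero_iff (h𝓐 _ hA₀)).2 hA₀1)
  · intro ω hω A hA
    have hωA₀ : ω ∈ A₀ := hω.1.1
    have hωG : ω ∈ G := hω.1.2
    have hωN : ∀ s ∈ D, ν ω s = ν' ω s := by
      have hm := hω.2
      rw [hN] at hm
      intro s hs
      exact Set.mem_iInter₂.1 hm s hs
    haveI := hνp ω
    have hνeq : ν ω = ν' ω :=
      ext_of_generate_finite C hCgen hCpi
        (fun s hs => hωN s (mem_insert_of_mem _ hs)) (hωN univ (mem_insert _ _))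
    rcases h01 ω hωA₀ A hA with h0 | h1
    · left
      have hwz : w A ω = 0 := by
        simp only [hwdef]
        rw [lintegral_indicator (h𝓐 A hA)]
        exact setLIntegral_measure_zero _ _ h0
      rw [hνeq, hν'app A (h𝓐 A hA) ω hωG, hwz, mul_zero]
    · right
      have hAc : μ ω Aᶜ = 0 := by
        haveI := hμp ω
        exact (prob_compl_eq_zero_iff (h𝓐 A hA)).2 h1
      have hwg : w A ω = g ω := by
        simp only [hwdef, hgdef]
        have hsplit : (∫⁻ x in A, f x ∂μ ω) + ∫⁻ x in Aᶜ, f x ∂μ ω = ∫⁻ x, f x ∂μ ω :=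
          lintegral_add_compl f (h𝓐 A hA)
        rw [lintegral_indicator (h𝓐 A hA), ← hsplit,
          setLIntegral_measure_zero _ _ hAc, add_zero]
      have hωG' := (hGmem ω).1 hωG
      rw [hνeq, hν'app A (h𝓐 A hA) ω hωG, hwg]
      exact ENNReal.inv_mul_cancel hωG'.1.ne' hωG'.2.ne
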